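/- arXiv:2207.11611 — 6 statements merged into one kernel-verified Lean document; each statement's English description precedes it below -/
import Mathlib

section
/- Let p > 0, t ≥ p+1 and h ∈ (1/t, 1). Then there exists N ∈ ℕ with N ≥ 2 such that p^h · ∑_{i=N+1}^∞ i^{-t h} < 1 and ∑_{i=2}^{N} ((i-1)^{-p} - i^{-p})^h ≥ 1. -/
open Filter Real

theorem stmt2 (p t h : ℝ) (hp : 0 < p) (ht : p + 1 ≤ t)
    (hh1 : 1 / t < h) (hh2 : h < 1) :
    ∃ N : ℕ, 2 ≤ N ∧
      p ^ h * ∑' i : ℕ, ((N : ℝ) + 1 + (i : ℝ)) ^ (-(t * h)) < 1 ∧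
      1 ≤ ∑ i ∈ Finset.Icc 2 N, (((i : ℝ) - 1) ^ (-p) - (i : ℝ) ^ (-p)) ^ h := by
  have ht0 : 0 < t := by linarith
  have hh0 : 0 < h := lt_trans (by positivity) hh1
  have hs : 1 < t * h := by
    rw [div_lt_iff₀ ht0] at hh1; nlinarith
  set s := t * h with hsdef
  -- tail tends to 0
  have hsum : Summable (fun n : ℕ => (n : ℝ) ^ (-s)) := by
    rw [Real.summable_nat_rpow]; linarith
  have htail : Tendsto (fun N : ℕ => p ^ h * ∑' i : ℕ, ((i + N : ℕ) : ℝ) ^ (-s))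
      atTop (nhds (p ^ h * 0)) := by
    exact (tendsto_sum_nat_add (fun n : ℕ => (n : ℝ) ^ (-s))).const_mul (p ^ h)
  rw [mul_zero] at htail
  have h1 : ∀ᶠ N : ℕ in atTop, p ^ h * ∑' i : ℕ, ((i + N : ℕ) : ℝ) ^ (-s) < 1 :=
    htail.eventually (eventually_lt_nhds zero_lt_one)
  -- δ > 0
  set a : ℝ := (2 : ℝ) ^ (-p) with hadef
  have ha0 : 0 < a := by positivity
  have ha1 : a < 1 := by
    apply Real.rpow_lt_one_of_one_lt_of_neg (by norm_num) (by linarith)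
  set δ : ℝ := (1 - a) ^ h - (1 - a) with hδdef
  have hδ0 : 0 < δ := by
    have : (1 - a) ^ (1:ℝ) < (1 - a) ^ h :=
      Real.rpow_lt_rpow_of_exponent_gt (by linarith) (by linarith) hh2
    rw [Real.rpow_one] at this
    simp only [hδdef]; linarith
  have h2 : ∀ᶠ N : ℕ in atTop, ((N : ℝ)) ^ (-p) ≤ δ := by
    have : Tendsto (fun N : ℕ => ((N : ℝ)) ^ (-p)) atTop (nhds 0) :=
      (tendsto_rpow_neg_atTop hp).comp tendsto_natCast_atTop_atTop
    exact this.eventually (eventually_le_nhds hδ0)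
  -- key lower bound by induction
  have key : ∀ N : ℕ, 2 ≤ N →
      δ + 1 - (N : ℝ) ^ (-p) ≤
        ∑ i ∈ Finset.Icc 2 N, (((i : ℝ) - 1) ^ (-p) - (i : ℝ) ^ (-p)) ^ h := by
    intro N hN
    induction N with
    | zero => omega
    | succ n ih =>
      rcases Nat.lt_or_ge n 2 with hn | hn
      · interval_cases n
        · omega
        · simp only [Finset.Icc_self, Finset.sum_singleton]
          norm_num [← hadef]
          linarith [hδdef.le, hδdef.ge]
      · have ih' := ih hn
        rw [Finset.sum_Icc_succ_top (by omega)]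
        have hterm : (n : ℝ) ^ (-p) - ((n:ℝ) + 1) ^ (-p) ≤
            (((n : ℝ)) ^ (-p) - ((n:ℝ) + 1) ^ (-p)) ^ h := by
          have hn0 : (0:ℝ) < (n:ℝ) := by exact_mod_cast (by omega : 0 < n)
          have hpos : 0 < (n : ℝ) ^ (-p) - ((n:ℝ) + 1) ^ (-p) := by
            have := Real.rpow_lt_rpow_of_neg (x := (n:ℝ)) (y := (n:ℝ)+1) (z := -p)
              hn0 (by linarith) (by linarith)
            linarith
          have hle1 : (n : ℝ) ^ (-p) - ((n:ℝ) + 1) ^ (-p) ≤ 1 := by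
            have h1 : (n : ℝ) ^ (-p) ≤ 1 :=
              Real.rpow_le_one_of_one_le_of_nonpos
                (by exact_mod_cast hn.trans' (by norm_num)) (by linarith)
            have h2 : 0 ≤ ((n:ℝ) + 1) ^ (-p) := by positivity
            linarith
          have := Real.rpow_le_rpow_of_exponent_ge hpos hle1 hh2.le
          rw [Real.rpow_one] at this
          exact this
        push_cast
        rw [show ((n:ℝ) + 1 - 1) = (n:ℝ) from by ring]
        linarith
  -- combine
  rw [eventually_atTop] at h1 h2
  obtain ⟨N1, hN1⟩ := h1
  obtain ⟨N2, hN2⟩ := h2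
  refine ⟨max 2 (max N1 N2), le_max_left _ _, ?_, ?_⟩
  · set N := max 2 (max N1 N2)
    have := hN1 (N + 1) (le_trans ((le_max_left N1 N2).trans (le_max_right _ _)) (Nat.le_succ N))
    convert this using 2
    apply tsum_congr; intro i
    rw [show ((N:ℝ) + 1 + (i:ℝ)) = (((i + (N+1) : ℕ)) : ℝ) from by push_cast; ring]
  · set N := max 2 (max N1 N2) with hNdef
    have h2N := hN2 N ((le_max_right N1 N2).trans (le_max_right _ _))
    have hk := key N (le_max_left _ _)
    linarith
end

section
/- Let θ ∈ (0,1), let a : (0,1] → [0,∞) be a nondecreasing continuous function with a(1) := lim_{φ→1⁻} a(φ), and let b ≥ 0. Define f(θ',φ) = ((φ⁻¹ − 1)·a(φ) + ((θ')⁻¹ − φ⁻¹)·b)/((θ')⁻¹ − 1) for 0 < θ' ≤ φ ≤ 1. If 0 < θ' ≤ θ < 1 and θ' ≤ φ' ≤ 1, then f(θ',φ') ≤ max_{φ ∈ [θ,1]} f(θ,φ). -/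
theorem stmt4 (θ : ℝ) (hθ : θ ∈ Set.Ioo (0 : ℝ) 1) (a : ℝ → ℝ) (b : ℝ)
    (ha_mono : MonotoneOn a (Set.Ioc 0 1))
    (ha_cont : ContinuousOn a (Set.Ioc 0 1))
    (ha_nonneg : ∀ φ ∈ Set.Ioc (0 : ℝ) 1, 0 ≤ a φ) (hb : 0 ≤ b)
    (θ' φ' : ℝ) (h1 : 0 < θ') (h2 : θ' ≤ θ) (h3 : θ' ≤ φ') (h4 : φ' ≤ 1) :
    ∃ φ ∈ Set.Icc θ 1,
      ((φ'⁻¹ - 1) * a φ' + (θ'⁻¹ - φ'⁻¹) * b) / (θ'⁻¹ - 1) ≤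
        ((φ⁻¹ - 1) * a φ + (θ⁻¹ - φ⁻¹) * b) / (θ⁻¹ - 1) := by
  obtain ⟨hθ0, hθ1⟩ := hθ
  have hφ'0 : 0 < φ' := lt_of_lt_of_le h1 h3
  have hθ'1 : θ' < 1 := lt_of_le_of_lt h2 hθ1
  have hD' : 0 < θ'⁻¹ - 1 := by
    have : 1 < θ'⁻¹ := (one_lt_inv₀ h1).mpr hθ'1
    linarith
  have hD : 0 < θ⁻¹ - 1 := by
    have : 1 < θ⁻¹ := (one_lt_inv₀ hθ0).mpr hθ1
    linarith
  have hN0 : 0 ≤ φ'⁻¹ - 1 := by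
    have : 1 ≤ φ'⁻¹ := (one_le_inv₀ hφ'0).mpr h4
    linarith
  have hND : φ'⁻¹ ≤ θ'⁻¹ := by
    apply inv_anti₀ h1 h3
  have hA : 0 ≤ a φ' := ha_nonneg φ' ⟨hφ'0, h4⟩
  by_cases hab : a φ' ≤ b
  · refine ⟨1, ⟨le_of_lt hθ1, le_refl 1⟩, ?_⟩
    rw [inv_one]
    rw [div_le_div_iff₀ hD' hD]
    nlinarith [mul_nonneg (sub_nonneg.mpr hND) (sub_nonneg.mpr hab),
      mul_nonneg hN0 (sub_nonneg.mpr hab),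
      mul_le_mul_of_nonneg_left (sub_nonneg.mpr hab) hN0]
  · push_neg at hab
    by_cases hφθ : φ' ≤ θ
    · refine ⟨θ, ⟨le_refl θ, le_of_lt hθ1⟩, ?_⟩
      have haθ : a φ' ≤ a θ := ha_mono ⟨hφ'0, h4⟩ ⟨hθ0, le_of_lt hθ1⟩ hφθ
      rw [div_le_div_iff₀ hD' hD]
      nlinarith [mul_le_mul_of_nonneg_left (le_of_lt hab) (sub_nonneg.mpr hND),
        mul_le_mul_of_nonneg_left haθ (le_of_lt hD'),
        mul_le_mul_of_nonneg_right
          (mul_le_mul_of_nonneg_left haθ (le_of_lt hD')) (le_of_lt hD),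
        mul_le_mul_of_nonneg_right
          (mul_le_mul_of_nonneg_left (le_of_lt hab) (sub_nonneg.mpr hND)) (le_of_lt hD)]
    · push_neg at hφθ
      refine ⟨φ', ⟨le_of_lt hφθ, h4⟩, ?_⟩
      have hDD' : θ⁻¹ ≤ θ'⁻¹ := inv_anti₀ h1 h2
      have hNθ : φ'⁻¹ ≤ θ⁻¹ := inv_anti₀ hθ0 (le_of_lt hφθ)
      rw [div_le_div_iff₀ hD' hD]
      nlinarith [mul_le_mul_of_nonneg_right
        (mul_le_mul_of_nonneg_left (sub_nonneg.mpr hDD') hN0)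
        (sub_nonneg.mpr (le_of_lt hab))]
end

section
/- Let b, q ≥ 0 with b ≤ q, and let ρ ∈ (0,1). Suppose a : (0,1] → [0,∞) satisfies a(φ) ≤ min{ b + ((1−ρ)φ/((1−φ)ρ))·(q − b), q } for all φ ∈ (0,1) (the three-parameter form with box dimension b, quasi-Assouad dimension q and phase transition ρ), with a(1) = q. Then for every θ ∈ (0, ρ), the function φ ↦ ((φ⁻¹ − 1)·a(φ) + (θ⁻¹ − φ⁻¹)·max{h, b}) / (θ⁻¹ − 1), with b < h < q, attains its maximum over φ ∈ [θ,1] at φ = ρ, and the maximum value equals h + ((1−ρ)θ/((1−θ)ρ))·(q − h). -/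
theorem stmt5 (b q h ρ θ : ℝ) (hb : 0 ≤ b) (hq : 0 ≤ q) (hbq : b ≤ q)
    (hbh : b < h) (hhq : h < q) (hρ : ρ ∈ Set.Ioo (0 : ℝ) 1)
    (a : ℝ → ℝ)
    (ha : ∀ φ ∈ Set.Ioo (0 : ℝ) 1,
      a φ = min (b + ((1 - ρ) * φ / ((1 - φ) * ρ)) * (q - b)) q)
    (ha1 : a 1 = q) (hθ : θ ∈ Set.Ioo (0 : ℝ) ρ) :
    (∀ φ ∈ Set.Icc θ 1,
      ((φ⁻¹ - 1) * a φ + (θ⁻¹ - φ⁻¹) * max h b) / (θ⁻¹ - 1) ≤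
        ((ρ⁻¹ - 1) * a ρ + (θ⁻¹ - ρ⁻¹) * max h b) / (θ⁻¹ - 1)) ∧
    ((ρ⁻¹ - 1) * a ρ + (θ⁻¹ - ρ⁻¹) * max h b) / (θ⁻¹ - 1) =
      h + ((1 - ρ) * θ / ((1 - θ) * ρ)) * (q - h) := by
  obtain ⟨hρ0, hρ1⟩ := hρ
  obtain ⟨hθ0, hθρ⟩ := hθ
  have hθ1 : θ < 1 := hθρ.trans hρ1
  have hmax : max h b = h := max_eq_left hbh.le
  have hden : 0 < θ⁻¹ - 1 := by
    have : 1 < θ⁻¹ := (one_lt_inv₀ hθ0).2 hθ1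
    linarith
  have haρ : a ρ = q := by
    rw [ha ρ ⟨hρ0, hρ1⟩]
    have h1 : (1 - ρ) * ρ / ((1 - ρ) * ρ) = 1 :=
      div_self (ne_of_gt (mul_pos (by linarith) hρ0))
    rw [h1]
    simp
  constructor
  · intro φ hφ
    obtain ⟨hθφ, hφ1⟩ := hφ
    have hφ0 : 0 < φ := hθ0.trans_le hθφ
    rw [hmax, haρ, div_le_div_iff_of_pos_right hden]
    rcases eq_or_lt_of_le hφ1 with rfl | hφ1
    · rw [ha1]
      simp only [inv_one, sub_self, zero_mul, zero_add]
      have hρi : 1 < ρ⁻¹ := (one_lt_inv₀ hρ0).2 hρ1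
      nlinarith
    · rw [ha φ ⟨hφ0, hφ1⟩]
      rcases le_or_gt φ ρ with hc | hc
      · have hle : min (b + (1 - ρ) * φ / ((1 - φ) * ρ) * (q - b)) q ≤
            b + (1 - ρ) * φ / ((1 - φ) * ρ) * (q - b) := min_le_left _ _
        have hco : 0 ≤ φ⁻¹ - 1 := by
          have : 1 ≤ φ⁻¹ := (one_le_inv₀ hφ0).2 hφ1.le
          linarith
        have hiρφ : ρ⁻¹ ≤ φ⁻¹ := by
          exact inv_anti₀ hφ0 hc
        have h3 : (ρ⁻¹ - 1) * q + (θ⁻¹ - ρ⁻¹) * h -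
            ((φ⁻¹ - 1) * (b + (1 - ρ) * φ / ((1 - φ) * ρ) * (q - b)) +
              (θ⁻¹ - φ⁻¹) * h) = (h - b) * (φ⁻¹ - ρ⁻¹) := by
          have h1φ : (1 : ℝ) - φ ≠ 0 := by linarith
          field_simp
          ring
        nlinarith [mul_le_mul_of_nonneg_left hle hco,
          mul_nonneg (by linarith : (0:ℝ) ≤ h - b) (by linarith : (0:ℝ) ≤ φ⁻¹ - ρ⁻¹)]
      · have hle : min (b + (1 - ρ) * φ / ((1 - φ) * ρ) * (q - b)) q ≤ q :=
          min_le_right _ _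
        have hco : 0 ≤ φ⁻¹ - 1 := by
          have : 1 ≤ φ⁻¹ := (one_le_inv₀ hφ0).2 hφ1.le
          linarith
        have hiφρ : φ⁻¹ ≤ ρ⁻¹ := inv_anti₀ hρ0 hc.le
        nlinarith [mul_le_mul_of_nonneg_left hle hco,
          mul_nonneg (by linarith : (0:ℝ) ≤ q - h) (by linarith : (0:ℝ) ≤ ρ⁻¹ - φ⁻¹)]
  · rw [hmax, haρ]
    rw [div_eq_iff (by linarith : θ⁻¹ - 1 ≠ 0)]
    have h1θ : (1 : ℝ) - θ ≠ 0 := by linarith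
    field_simp
    ring
end

section
/- Let α ∈ (0,1) and for k ∈ ℕ set I_k = ℕ ∩ [2^k, 2^k + 2^{kα}]. Then for every s > α/2 the series ∑_{k=1}^∞ ∑_{i ∈ I_k} i^{−2s} converges, and for every s < α/2 it diverges. Consequently inf{ s ≥ 0 : ∑_k ∑_{i∈I_k} i^{−2s} < ∞ } = α/2. -/
open Finset Filter

private lemma stmt13_pow (k : ℕ) : ((2 ^ k : ℕ) : ℝ) = (2 : ℝ) ^ ((k : ℝ)) := by
  rw [Real.rpow_natCast]; push_cast; ring

private lemma stmt13_card (k m : ℕ) :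
    (Finset.Icc (2 ^ (k + 1)) (2 ^ (k + 1) + m)).card = m + 1 := by
  rw [Nat.card_Icc]; omega

private lemma stmt13_upper (α s : ℝ) (hα : 0 ≤ α) (hs : 0 ≤ s) (k : ℕ) :
    (∑ i ∈ Finset.Icc (2 ^ (k + 1)) (2 ^ (k + 1) + ⌊(2 : ℝ) ^ (((k : ℝ) + 1) * α)⌋₊),
      ((i : ℝ)) ^ (-(2 * s))) ≤ 2 * (2 : ℝ) ^ (((k : ℝ) + 1) * (α - 2 * s)) := by
  set m := ⌊(2 : ℝ) ^ (((k : ℝ) + 1) * α)⌋₊ with hm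
  have h1 : (∑ i ∈ Finset.Icc (2 ^ (k + 1)) (2 ^ (k + 1) + m), ((i : ℝ)) ^ (-(2 * s)))
      ≤ (m + 1 : ℕ) • ((2 : ℝ) ^ (((k : ℝ) + 1) * (-(2 * s)))) := by
    rw [← stmt13_card k m]
    apply Finset.sum_le_card_nsmul
    intro i hi
    simp only [Finset.mem_Icc] at hi
    have h2 : (2 : ℝ) ^ (((k : ℝ) + 1) * (-(2 * s))) = ((2 ^ (k + 1) : ℕ) : ℝ) ^ (-(2 * s)) := by
      rw [stmt13_pow, ← Real.rpow_mul (by norm_num)]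
      congr 1; push_cast; ring
    rw [h2]
    apply Real.rpow_le_rpow_of_nonpos
    · positivity
    · exact_mod_cast hi.1
    · linarith
  have hcard : ((m : ℝ) + 1) ≤ 2 * (2 : ℝ) ^ (((k : ℝ) + 1) * α) := by
    have h3 : (m : ℝ) ≤ (2 : ℝ) ^ (((k : ℝ) + 1) * α) := Nat.floor_le (by positivity)
    have h4 : (1 : ℝ) ≤ (2 : ℝ) ^ (((k : ℝ) + 1) * α) :=
      Real.one_le_rpow one_le_two (by positivity)
    linarith
  calc _ ≤ (m + 1 : ℕ) • ((2 : ℝ) ^ (((k : ℝ) + 1) * (-(2 * s)))) := h1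
    _ = ((m : ℝ) + 1) * (2 : ℝ) ^ (((k : ℝ) + 1) * (-(2 * s))) := by
        rw [nsmul_eq_mul]; push_cast; ring
    _ ≤ 2 * (2 : ℝ) ^ (((k : ℝ) + 1) * α) * (2 : ℝ) ^ (((k : ℝ) + 1) * (-(2 * s))) := by
        apply mul_le_mul_of_nonneg_right hcard (by positivity)
    _ = 2 * (2 : ℝ) ^ (((k : ℝ) + 1) * (α - 2 * s)) := by
        rw [mul_assoc, ← Real.rpow_add (by norm_num)]; ring_nf

private lemma stmt13_lower (α s : ℝ) (hα0 : 0 ≤ α) (hα1 : α ≤ 1) (hs : 0 ≤ s) (k : ℕ) :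
    (2 : ℝ) ^ (((k : ℝ) + 1) * α - 2 * s * ((k : ℝ) + 2)) ≤
    (∑ i ∈ Finset.Icc (2 ^ (k + 1)) (2 ^ (k + 1) + ⌊(2 : ℝ) ^ (((k : ℝ) + 1) * α)⌋₊),
      ((i : ℝ)) ^ (-(2 * s))) := by
  set m := ⌊(2 : ℝ) ^ (((k : ℝ) + 1) * α)⌋₊ with hm
  have hmle : m ≤ 2 ^ (k + 1) := by
    have h1 : (m : ℝ) ≤ (2 : ℝ) ^ (((k : ℝ) + 1) * α) := Nat.floor_le (by positivity)
    have h2 : (2 : ℝ) ^ (((k : ℝ) + 1) * α) ≤ (2 : ℝ) ^ ((k : ℝ) + 1) := by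
      apply Real.rpow_le_rpow_of_exponent_le one_le_two
      nlinarith [Nat.cast_nonneg (α := ℝ) k]
    have h3 : (2 : ℝ) ^ ((k : ℝ) + 1) = ((2 ^ (k + 1) : ℕ) : ℝ) := by
      rw [stmt13_pow]; congr 1; push_cast; ring
    exact_mod_cast (h1.trans (h2.trans h3.le))
  have h1 : ((m + 1 : ℕ)) • (((2 ^ (k + 2) : ℕ) : ℝ)) ^ (-(2 * s))
      ≤ ∑ i ∈ Finset.Icc (2 ^ (k + 1)) (2 ^ (k + 1) + m), ((i : ℝ)) ^ (-(2 * s)) := by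
    rw [← stmt13_card k m]
    apply Finset.card_nsmul_le_sum
    intro i hi
    simp only [Finset.mem_Icc] at hi
    apply Real.rpow_le_rpow_of_nonpos
    · have : 0 < 2 ^ (k + 1) := Nat.pow_pos (by norm_num)
      have : 0 < i := lt_of_lt_of_le this hi.1
      exact_mod_cast this
    · have : i ≤ 2 ^ (k + 2) := by
        calc i ≤ 2 ^ (k + 1) + m := hi.2
          _ ≤ 2 ^ (k + 1) + 2 ^ (k + 1) := by omega
          _ = 2 ^ (k + 2) := by ring
      exact_mod_cast this
    · linarith
  have h2 : (((2 ^ (k + 2) : ℕ) : ℝ)) ^ (-(2 * s)) = (2 : ℝ) ^ (((k : ℝ) + 2) * (-(2 * s))) := by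
    rw [stmt13_pow, ← Real.rpow_mul (by norm_num)]
    congr 1; push_cast; ring
  refine le_trans ?_ h1
  rw [h2, nsmul_eq_mul]
  have h3 : (2 : ℝ) ^ (((k : ℝ) + 1) * α) ≤ ((m + 1 : ℕ) : ℝ) := by
    push_cast
    exact (Nat.lt_floor_add_one _).le
  calc (2 : ℝ) ^ (((k : ℝ) + 1) * α - 2 * s * ((k : ℝ) + 2))
      = (2 : ℝ) ^ (((k : ℝ) + 1) * α) * (2 : ℝ) ^ (((k : ℝ) + 2) * (-(2 * s))) := by
        rw [← Real.rpow_add (by norm_num)]; ring_nf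
    _ ≤ ((m + 1 : ℕ) : ℝ) * (2 : ℝ) ^ (((k : ℝ) + 2) * (-(2 * s))) :=
        mul_le_mul_of_nonneg_right h3 (by positivity)

theorem stmt13 (α : ℝ) (hα : α ∈ Set.Ioo (0 : ℝ) 1) :
    (∀ s : ℝ, α / 2 < s →
      Summable (fun k : ℕ =>
        ∑ i ∈ Finset.Icc (2 ^ (k + 1)) (2 ^ (k + 1) + ⌊(2 : ℝ) ^ (((k : ℝ) + 1) * α)⌋₊),
          ((i : ℝ)) ^ (-(2 * s)))) ∧
    (∀ s : ℝ, s < α / 2 →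
      ¬ Summable (fun k : ℕ =>
        ∑ i ∈ Finset.Icc (2 ^ (k + 1)) (2 ^ (k + 1) + ⌊(2 : ℝ) ^ (((k : ℝ) + 1) * α)⌋₊),
          ((i : ℝ)) ^ (-(2 * s)))) ∧
    sInf {s : ℝ | 0 ≤ s ∧
      Summable (fun k : ℕ =>
        ∑ i ∈ Finset.Icc (2 ^ (k + 1)) (2 ^ (k + 1) + ⌊(2 : ℝ) ^ (((k : ℝ) + 1) * α)⌋₊),
          ((i : ℝ)) ^ (-(2 * s)))} = α / 2 := by
  obtain ⟨hα0, hα1⟩ := hα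
  -- Part 1: summability for s > α/2
  have part1 : ∀ s : ℝ, α / 2 < s →
      Summable (fun k : ℕ =>
        ∑ i ∈ Finset.Icc (2 ^ (k + 1)) (2 ^ (k + 1) + ⌊(2 : ℝ) ^ (((k : ℝ) + 1) * α)⌋₊),
          ((i : ℝ)) ^ (-(2 * s))) := by
    intro s hs
    have hs0 : 0 ≤ s := by linarith
    set r : ℝ := (2 : ℝ) ^ (α - 2 * s) with hr
    have hr0 : 0 ≤ r := (Real.rpow_pos_of_pos (by norm_num) _).le
    have hr1 : r < 1 := Real.rpow_lt_one_of_one_lt_of_neg one_lt_two (by linarith)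
    have hgeo : Summable (fun k : ℕ => 2 * r ^ (k + 1)) := by
      have := (summable_geometric_of_lt_one hr0 hr1).mul_left (2 * r)
      refine this.congr (fun k => ?_)
      ring
    apply Summable.of_nonneg_of_le (fun k => ?_) (fun k => ?_) hgeo
    · apply Finset.sum_nonneg
      intro i _
      positivity
    · have := stmt13_upper α s hα0.le hs0 k
      refine this.trans ?_
      have : (2 : ℝ) ^ (((k : ℝ) + 1) * (α - 2 * s)) = r ^ (k + 1) := by
        rw [hr, mul_comm, Real.rpow_mul (by norm_num : (0:ℝ) ≤ 2),
          ← Real.rpow_natCast ((2:ℝ) ^ (α - 2*s)) (k + 1)]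
        congr 1; push_cast; ring
      rw [this]
  -- Part 2: divergence for s < α/2
  have part2 : ∀ s : ℝ, s < α / 2 →
      ¬ Summable (fun k : ℕ =>
        ∑ i ∈ Finset.Icc (2 ^ (k + 1)) (2 ^ (k + 1) + ⌊(2 : ℝ) ^ (((k : ℝ) + 1) * α)⌋₊),
          ((i : ℝ)) ^ (-(2 * s))) := by
    intro s hs hsum
    have htend := hsum.tendsto_atTop_zero
    have hev : ∀ᶠ k : ℕ in atTop,
        (∑ i ∈ Finset.Icc (2 ^ (k + 1)) (2 ^ (k + 1) + ⌊(2 : ℝ) ^ (((k : ℝ) + 1) * α)⌋₊),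
          ((i : ℝ)) ^ (-(2 * s))) < 1 := by
      have := htend.eventually (eventually_lt_nhds (show (0:ℝ) < 1 by norm_num))
      exact this
    have hge : ∀ᶠ k : ℕ in atTop,
        (1 : ℝ) ≤ ∑ i ∈ Finset.Icc (2 ^ (k + 1)) (2 ^ (k + 1) + ⌊(2 : ℝ) ^ (((k : ℝ) + 1) * α)⌋₊),
          ((i : ℝ)) ^ (-(2 * s)) := by
      rcases le_or_gt 0 s with hs0 | hs0
      · -- 0 ≤ s < α/2 : use count lower bound
        have hd : 0 < α - 2 * s := by linarith
        filter_upwards [eventually_ge_atTop ⌈2 * s / (α - 2 * s)⌉₊] with k hk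
        have hk' : 2 * s / (α - 2 * s) ≤ (k : ℝ) := by
          have := Nat.ceil_le.mp hk
          exact_mod_cast this
        have hexp : 0 ≤ ((k : ℝ) + 1) * α - 2 * s * ((k : ℝ) + 2) := by
          have h1 : 2 * s ≤ (k : ℝ) * (α - 2 * s) := by
            rw [div_le_iff₀ hd] at hk'
            linarith
          nlinarith
        calc (1 : ℝ) = (2 : ℝ) ^ (0 : ℝ) := (Real.rpow_zero 2).symm
          _ ≤ (2 : ℝ) ^ (((k : ℝ) + 1) * α - 2 * s * ((k : ℝ) + 2)) :=
              Real.rpow_le_rpow_of_exponent_le one_le_two hexp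
          _ ≤ _ := stmt13_lower α s hα0.le hα1.le hs0 k
      · -- s < 0 : every term is ≥ 1
        filter_upwards with k
        set m := ⌊(2 : ℝ) ^ (((k : ℝ) + 1) * α)⌋₊
        have hterm : ∀ i ∈ Finset.Icc (2 ^ (k + 1)) (2 ^ (k + 1) + m),
            (1 : ℝ) ≤ ((i : ℝ)) ^ (-(2 * s)) := by
          intro i hi
          simp only [Finset.mem_Icc] at hi
          apply Real.one_le_rpow
          · have : (1 : ℕ) ≤ i := le_trans (Nat.one_le_two_pow) hi.1
            exact_mod_cast this
          · linarith
        calc (1 : ℝ) = ((1 : ℕ) : ℝ) := by norm_num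
          _ ≤ (((Finset.Icc (2 ^ (k + 1)) (2 ^ (k + 1) + m)).card : ℕ) : ℝ) := by
              rw [stmt13_card k m]; exact_mod_cast Nat.le_add_left 1 m
          _ = ∑ i ∈ Finset.Icc (2 ^ (k + 1)) (2 ^ (k + 1) + m), (1 : ℝ) := by
              rw [Finset.sum_const, nsmul_eq_mul, mul_one]
          _ ≤ _ := Finset.sum_le_sum hterm
    obtain ⟨k, hk1, hk2⟩ := (hev.and hge).exists
    linarith
  refine ⟨part1, part2, ?_⟩
  -- sInf part
  set A : Set ℝ := {s : ℝ | 0 ≤ s ∧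
      Summable (fun k : ℕ =>
        ∑ i ∈ Finset.Icc (2 ^ (k + 1)) (2 ^ (k + 1) + ⌊(2 : ℝ) ^ (((k : ℝ) + 1) * α)⌋₊),
          ((i : ℝ)) ^ (-(2 * s)))} with hA
  have hmem : ∀ s : ℝ, α / 2 < s → s ∈ A := fun s hs =>
    ⟨by linarith, part1 s hs⟩
  have hne : A.Nonempty := ⟨α, hmem α (by linarith)⟩
  have hbdd : BddBelow A := ⟨0, fun s hs => hs.1⟩
  have hlb : ∀ s ∈ A, α / 2 ≤ s := by
    intro s hs
    by_contra h
    exact part2 s (lt_of_not_ge h) hs.2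
  apply le_antisymm
  · apply le_of_forall_pos_le_add
    intro ε hε
    exact csInf_le hbdd (hmem (α / 2 + ε) (by linarith))
  · exact le_csInf hne hlb
end

section
/- Let k ≥ 10 be an integer and suppose (M_n) is a strictly increasing sequence of positive integers with M_{n+1} > M_n^{k/(k−2)}, and suppose I ⊆ ℕ satisfies #(I ∩ [1, M_n^{k/(k−2)}]) ≥ (M_n^{k/(k−2)})^{1−1/k} for all n. Then there is a constant c > 0 (independent of n) with #(I ∩ [M_n, M_n^{k/(k−2)}]) ≥ c·M_n^{(k−1)/(k−2)} for all n, and the series ∑_{b ∈ I} b^{−2·(k−1)/(2k)} = ∑_{b ∈ I} b^{−(k−1)/k} diverges. -/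
theorem stmt14 (k : ℕ) (hk : 10 ≤ k) (M : ℕ → ℕ) (hMpos : ∀ n, 0 < M n)
    (hMinc : ∀ n, ((M n : ℝ)) ^ ((k : ℝ) / ((k : ℝ) - 2)) < (M (n + 1) : ℝ))
    (I : Set ℕ)
    (hI : ∀ n, (((M n : ℝ)) ^ ((k : ℝ) / ((k : ℝ) - 2))) ^ (1 - 1 / (k : ℝ)) ≤
      ((I ∩ Set.Icc 1 ⌊((M n : ℝ)) ^ ((k : ℝ) / ((k : ℝ) - 2))⌋₊).ncard : ℝ)) :
    (∃ c > 0, ∀ n, c * ((M n : ℝ)) ^ (((k : ℝ) - 1) / ((k : ℝ) - 2)) ≤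
      ((I ∩ Set.Icc (M n) ⌊((M n : ℝ)) ^ ((k : ℝ) / ((k : ℝ) - 2))⌋₊).ncard : ℝ)) ∧
    ¬ Summable (fun b : I => ((b : ℕ) : ℝ) ^ (-(((k : ℝ) - 1) / (k : ℝ)))) := by
  classical
  have hK10 : (10:ℝ) ≤ (k:ℝ) := by exact_mod_cast hk
  set K : ℝ := (k:ℝ) with hKdef
  have hK2 : (0:ℝ) < K - 2 := by linarith
  have hK0 : (0:ℝ) < K := by linarith
  set α : ℝ := K / (K - 2) with hα
  set γ : ℝ := (K - 1) / (K - 2) with hγ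
  set e : ℝ := (K - 1) / K with he
  have hα1 : (1:ℝ) ≤ α := by rw [hα, le_div_iff₀ hK2]; linarith
  have hγ1 : (1:ℝ) ≤ γ := by rw [hγ, le_div_iff₀ hK2]; linarith
  have hγ0 : (0:ℝ) ≤ γ := by linarith
  have hae : α * (1 - 1/K) = γ := by
    rw [hα, hγ]; field_simp
  have haee : α * e = γ := by
    rw [hα, hγ, he]; field_simp
  have hγ1' : γ - 1 = 1/(K-2) := by
    rw [hγ]; field_simp; norm_num
  set c : ℝ := (2:ℝ) ^ (-K) with hcdef
  have hc0 : (0:ℝ) < c := Real.rpow_pos_of_pos (by norm_num) _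
  have hx1 : ∀ n, (1:ℝ) ≤ (M n : ℝ) := fun n => by exact_mod_cast hMpos n
  let N : ℕ → ℕ := fun n => ⌊(M n : ℝ) ^ α⌋₊
  have hNdef : ∀ n, ⌊(M n : ℝ) ^ α⌋₊ = N n := fun n => rfl
  simp only [hNdef] at hI ⊢
  have hxα : ∀ n, (M n : ℝ) ≤ (M n : ℝ) ^ α := fun n => by
    nth_rewrite 1 [← Real.rpow_one (M n : ℝ)]
    exact Real.rpow_le_rpow_of_exponent_le (hx1 n) hα1
  have hMN : ∀ n, M n ≤ N n := fun n => Nat.le_floor (hxα n)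
  have hNle : ∀ n, (N n : ℝ) ≤ (M n : ℝ) ^ α := fun n => Nat.floor_le (by positivity)
  have hIγ : ∀ n, (M n : ℝ) ^ γ ≤ ((I ∩ Set.Icc 1 (N n)).ncard : ℝ) := by
    intro n
    have h := hI n
    rwa [← Real.rpow_mul (by positivity), hae] at h
  -- counting bound
  have hcount : ∀ n, (M n : ℝ) ^ γ - (M n : ℝ) + 1 ≤ ((I ∩ Set.Icc (M n) (N n)).ncard : ℝ) := by
    intro n
    have hsub : I ∩ Set.Icc 1 (N n) ⊆ (I ∩ Set.Icc (M n) (N n)) ∪ Set.Icc 1 (M n - 1) := by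
      rintro b ⟨hbI, hb1, hb2⟩
      by_cases h : M n ≤ b
      · exact Or.inl ⟨hbI, h, hb2⟩
      · exact Or.inr ⟨hb1, by omega⟩
    have hfin : (I ∩ Set.Icc (M n) (N n)).Finite :=
      (Set.finite_Icc _ _).inter_of_right _
    have hIcc : (Set.Icc 1 (M n - 1)).ncard = M n - 1 := by
      rw [← Finset.coe_Icc, Set.ncard_coe_finset, Nat.card_Icc]; omega
    have h2 : (I ∩ Set.Icc 1 (N n)).ncard ≤ (I ∩ Set.Icc (M n) (N n)).ncard + (M n - 1) := by
      calc (I ∩ Set.Icc 1 (N n)).ncard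
          ≤ ((I ∩ Set.Icc (M n) (N n)) ∪ Set.Icc 1 (M n - 1)).ncard :=
            Set.ncard_le_ncard hsub (hfin.union (Set.finite_Icc _ _))
        _ ≤ (I ∩ Set.Icc (M n) (N n)).ncard + (Set.Icc 1 (M n - 1)).ncard :=
            Set.ncard_union_le _ _
        _ = (I ∩ Set.Icc (M n) (N n)).ncard + (M n - 1) := by rw [hIcc]
    have h2' : ((I ∩ Set.Icc 1 (N n)).ncard : ℝ)
        ≤ ((I ∩ Set.Icc (M n) (N n)).ncard : ℝ) + ((M n : ℝ) - 1) := by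
      have hc : ((M n - 1 : ℕ) : ℝ) = (M n : ℝ) - 1 := by
        have h1 : 1 ≤ M n := hMpos n
        push_cast [Nat.cast_sub h1]
        ring
      calc ((I ∩ Set.Icc 1 (N n)).ncard : ℝ)
          ≤ (((I ∩ Set.Icc (M n) (N n)).ncard + (M n - 1) : ℕ) : ℝ) := by exact_mod_cast h2
        _ = ((I ∩ Set.Icc (M n) (N n)).ncard : ℝ) + ((M n : ℝ) - 1) := by
            push_cast [hc]; ring
    have h1 := hIγ n
    linarith
  -- key inequality
  have key : ∀ x : ℝ, 1 ≤ x → c * x ^ γ ≤ x ^ γ - x + 1 := by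
    intro x hx
    have hx0 : (0:ℝ) < x := by linarith
    have hxγ : x ≤ x ^ γ := by
      nth_rewrite 1 [← Real.rpow_one x]
      exact Real.rpow_le_rpow_of_exponent_le hx hγ1
    have hxγ0 : (0:ℝ) ≤ x ^ γ := by positivity
    rcases le_or_gt x ((2:ℝ) ^ (K - 2)) with h | h
    · have h1 : x ^ γ ≤ ((2:ℝ) ^ (K - 2)) ^ γ := Real.rpow_le_rpow hx0.le h hγ0
      have h2 : ((2:ℝ) ^ (K - 2)) ^ γ = (2:ℝ) ^ (K - 1) := by
        rw [← Real.rpow_mul (by norm_num)]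
        congr 1
        rw [hγ]; field_simp
      have h3 : c * x ^ γ ≤ c * ((2:ℝ) ^ (K - 1)) := by
        apply mul_le_mul_of_nonneg_left _ hc0.le
        rw [h2] at h1; exact h1
      have h4 : c * (2:ℝ) ^ (K - 1) = (2:ℝ) ^ (-(1:ℝ)) := by
        rw [hcdef, ← Real.rpow_add (by norm_num)]
        congr 1
        ring
      have h5 : (2:ℝ) ^ (-(1:ℝ)) ≤ 1 := by
        rw [Real.rpow_neg (by norm_num), Real.rpow_one]
        norm_num
      linarith
    · have h1 : ((2:ℝ) ^ (K - 2)) ^ (γ - 1) ≤ x ^ (γ - 1) := by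
        apply Real.rpow_le_rpow (by positivity) h.le
        rw [hγ1']; positivity
      have h2 : ((2:ℝ) ^ (K - 2)) ^ (γ - 1) = 2 := by
        rw [← Real.rpow_mul (by norm_num), hγ1', mul_one_div, div_self (ne_of_gt hK2),
          Real.rpow_one]
      have h3 : (2:ℝ) ≤ x ^ (γ - 1) := by rw [← h2]; exact h1
      have h4 : x ^ (γ - 1) = x ^ γ / x := by
        rw [Real.rpow_sub hx0, Real.rpow_one]
      have h5 : 2 * x ≤ x ^ γ := by
        rw [h4, le_div_iff₀ hx0] at h3
        linarith
      have h6 : c ≤ 1/2 := by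
        have h7 : (2:ℝ) ^ (-K) ≤ (2:ℝ) ^ (-(1:ℝ)) :=
          Real.rpow_le_rpow_of_exponent_le (by norm_num) (by linarith)
        have h8 : (2:ℝ) ^ (-(1:ℝ)) = 1/2 := by
          rw [Real.rpow_neg (by norm_num), Real.rpow_one]; norm_num
        rw [hcdef, ← h8]
        exact h7
      have h7 : c * x ^ γ ≤ (1/2) * x ^ γ := mul_le_mul_of_nonneg_right h6 hxγ0
      linarith
  have hpart1 : ∀ n, c * (M n : ℝ) ^ γ ≤ ((I ∩ Set.Icc (M n) (N n)).ncard : ℝ) := by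
    intro n
    have h1 := key (M n : ℝ) (hx1 n)
    have h2 := hcount n
    linarith
  refine ⟨⟨c, hc0, hpart1⟩, ?_⟩
  -- summability
  intro hsum
  set g : ℕ → ℝ := fun b => (b : ℝ) ^ (-e) with hgdef
  have hsum' : Summable (Set.indicator I g) := by
    rw [← summable_subtype_iff_indicator]
    exact hsum
  have hg0 : ∀ b, 0 ≤ Set.indicator I g b :=
    fun b => Set.indicator_nonneg (fun a _ => Real.rpow_nonneg (Nat.cast_nonneg a) _) b
  have hblock : ∀ n, c ≤ ∑ b ∈ Finset.Icc (M n) (N n), Set.indicator I g b := by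
    intro n
    have hxpos : (0:ℝ) < (M n : ℝ) := by exact_mod_cast hMpos n
    have hfilter : ∑ b ∈ Finset.Icc (M n) (N n), Set.indicator I g b
        = ∑ b ∈ (Finset.Icc (M n) (N n)).filter (· ∈ I), g b := by
      rw [Finset.sum_filter]
      apply Finset.sum_congr rfl
      intro b _
      simp [Set.indicator_apply]
    have hcard : ((Finset.Icc (M n) (N n)).filter (· ∈ I)).card
        = (I ∩ Set.Icc (M n) (N n)).ncard := by
      rw [← Set.ncard_coe_finset]
      congr 1
      ext b
      simp only [Finset.coe_filter, Finset.mem_Icc, Set.mem_inter_iff, Set.mem_setOf_eq,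
        Set.mem_Icc]
      tauto
    have hterm : ∀ b ∈ (Finset.Icc (M n) (N n)).filter (· ∈ I), (M n : ℝ) ^ (-γ) ≤ g b := by
      intro b hb
      simp only [Finset.mem_filter, Finset.mem_Icc] at hb
      have hb1 : (0:ℝ) < (b : ℝ) := by
        have : 1 ≤ b := le_trans (hMpos n) hb.1.1
        exact_mod_cast this
      have hble : (b : ℝ) ≤ (M n : ℝ) ^ α :=
        le_trans (Nat.cast_le.mpr hb.1.2) (hNle n)
      have h1 : ((M n : ℝ) ^ α) ^ (-e) ≤ (b : ℝ) ^ (-e) := by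
        apply Real.rpow_le_rpow_of_nonpos hb1 hble
        rw [he, neg_nonpos]
        apply div_nonneg (by linarith) (by linarith)
      have h2 : (M n : ℝ) ^ (-γ) = ((M n : ℝ) ^ α) ^ (-e) := by
        rw [← Real.rpow_mul hxpos.le]
        congr 1
        rw [mul_neg, haee]
      rw [h2]
      exact h1
    have hsum_ge := Finset.card_nsmul_le_sum _ _ _ hterm
    rw [nsmul_eq_mul, hcard] at hsum_ge
    have hmul : (M n : ℝ) ^ γ * (M n : ℝ) ^ (-γ) = 1 := by
      rw [← Real.rpow_add hxpos]
      simp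
    have hxg0 : (0:ℝ) < (M n : ℝ) ^ (-γ) := Real.rpow_pos_of_pos hxpos _
    calc c = c * (M n : ℝ) ^ γ * (M n : ℝ) ^ (-γ) := by
          rw [mul_assoc, hmul, mul_one]
      _ ≤ ((I ∩ Set.Icc (M n) (N n)).ncard : ℝ) * (M n : ℝ) ^ (-γ) :=
          mul_le_mul_of_nonneg_right (hpart1 n) hxg0.le
      _ ≤ ∑ b ∈ (Finset.Icc (M n) (N n)).filter (· ∈ I), g b := hsum_ge
      _ = ∑ b ∈ Finset.Icc (M n) (N n), Set.indicator I g b := hfilter.symm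
  have hNM : ∀ n, N n < M (n + 1) := by
    intro n
    have h : (N n : ℝ) < (M (n + 1) : ℝ) := lt_of_le_of_lt (hNle n) (hMinc n)
    exact_mod_cast h
  have hMmono : Monotone M :=
    monotone_nat_of_le_succ fun n => le_of_lt (lt_of_le_of_lt (hMN n) (hNM n))
  have hdisj : ∀ i j, i < j →
      Disjoint (Finset.Icc (M i) (N i)) (Finset.Icc (M j) (N j)) := by
    intro i j hij
    apply Finset.disjoint_left.mpr
    intro b hb hb'
    simp only [Finset.mem_Icc] at hb hb'
    have h1 : N i < M j := lt_of_lt_of_le (hNM i) (hMmono hij)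
    omega
  obtain ⟨m, hm⟩ := exists_nat_gt ((∑' b, Set.indicator I g b) / c)
  have hpd : (↑(Finset.range m) : Set ℕ).PairwiseDisjoint
      (fun n => Finset.Icc (M n) (N n)) := by
    intro i _ j _ hij
    rcases lt_or_gt_of_ne hij with h | h
    · exact hdisj i j h
    · exact (hdisj j i h).symm
  have hbig : (m : ℝ) * c ≤ ∑' b, Set.indicator I g b := by
    calc (m : ℝ) * c = ∑ _n ∈ Finset.range m, c := by
          rw [Finset.sum_const, Finset.card_range, nsmul_eq_mul]
      _ ≤ ∑ n ∈ Finset.range m, ∑ b ∈ Finset.Icc (M n) (N n), Set.indicator I g b :=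
          Finset.sum_le_sum fun n _ => hblock n
      _ = ∑ b ∈ (Finset.range m).biUnion (fun n => Finset.Icc (M n) (N n)),
            Set.indicator I g b := (Finset.sum_biUnion hpd).symm
      _ ≤ ∑' b, Set.indicator I g b :=
          Summable.sum_le_tsum _ (fun b _ => hg0 b) hsum'
  rw [div_lt_iff₀ hc0] at hm
  linarith
end

section
/- For any countable collection of maps S_i : [0,1] → [0,1] of the form S_i(x) = c_i x + p_i with c_i > 0, p_i ≥ 0 and p_i + c_i ≤ 1, if the limit set F (the set of points of the form lim_n S_{w_1}∘⋯∘S_{w_n}(0) over infinite words w) contains, for every θ ∈ (0,1) and all sufficiently large i, the property that F ∩ (p_i − r^θ/2, p_i + r^θ/2) ⊆ S_i([0,1]) where r is the size of S_i([0,1]), then a ball of radius r^θ around p_i meets F in a set covered by one interval of length r. In particular, for the system S_i(x) = 2^{−i} x + i^{−1} (i ≥ 2): for every θ ∈ (0,1) there exists i₀ such that for all i ≥ i₀, N_{2^{−i}}( F ∩ (i^{−1} − 2^{−iθ}/2, i^{−1} + 2^{−iθ}/2) ) = 1, where N_r denotes the smallest number of intervals of length 2r needed to cover the set. -/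
/-- The similarity maps `S_i(x) = 2^{-i} x + i⁻¹` of the CIFS. -/
noncomputable def S15 (i : ℕ) (x : ℝ) : ℝ := ((2 : ℝ) ^ i)⁻¹ * x + (i : ℝ)⁻¹

/-- `prefixMap w n = S_{w 0} ∘ S_{w 1} ∘ ⋯ ∘ S_{w (n-1)}`. -/
noncomputable def prefixMap15 (w : ℕ → ℕ) : ℕ → ℝ → ℝ
  | 0 => id
  | n + 1 => fun x => prefixMap15 w n (S15 (w n) x)

/-- The limit set of the CIFS `{S_i : i ≥ 2}`. -/
noncomputable def F15 : Set ℝ :=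
  {x | ∃ w : ℕ → ℕ, (∀ n, 2 ≤ w n) ∧
    Filter.Tendsto (fun n => prefixMap15 w n 0) Filter.atTop (nhds x)}

/-- `covNum r E`: the smallest number of intervals of length `2r`
(i.e. balls of radius `r`) needed to cover `E`. -/
noncomputable def covNum15 (r : ℝ) (E : Set ℝ) : ℕ :=
  sInf {m : ℕ | ∃ c : Fin m → ℝ, E ⊆ ⋃ j, Metric.ball (c j) r}

lemma Icc15_subset_unit {j : ℕ} (hj : 2 ≤ j) :
    Set.Icc ((j:ℝ)⁻¹) ((j:ℝ)⁻¹ + ((2:ℝ)^j)⁻¹) ⊆ Set.Icc (0:ℝ) 1 := by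
  have hj1 : (1:ℝ) ≤ j := by exact_mod_cast hj.trans' (by norm_num)
  have h1 : (j:ℝ)⁻¹ ≤ 1/2 := by
    rw [inv_le_comm₀ (by positivity) (by norm_num)]
    push_cast; norm_num; exact_mod_cast hj
  have h2 : ((2:ℝ)^j)⁻¹ ≤ 1/4 := by
    rw [inv_le_comm₀ (by positivity) (by norm_num)]
    calc ((1:ℝ)/4)⁻¹ = 2^2 := by norm_num
    _ ≤ 2^j := by exact pow_le_pow_right₀ (by norm_num) hj
  intro x hx
  constructor
  · exact le_trans (by positivity) hx.1
  · linarith [hx.2]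

lemma S15_mem_Icc {j : ℕ} {x : ℝ} (hx : x ∈ Set.Icc (0:ℝ) 1) :
    S15 j x ∈ Set.Icc ((j:ℝ)⁻¹) ((j:ℝ)⁻¹ + ((2:ℝ)^j)⁻¹) := by
  obtain ⟨hx0, hx1⟩ := hx
  have hp : (0:ℝ) < ((2:ℝ)^j)⁻¹ := by positivity
  have h1 : (0:ℝ) ≤ ((2:ℝ)^j)⁻¹ * x := by positivity
  have h2 : ((2:ℝ)^j)⁻¹ * x ≤ ((2:ℝ)^j)⁻¹ := by nlinarith
  exact ⟨by simp only [S15]; linarith, by simp only [S15]; linarith⟩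

lemma prefixMap15_mem_unit {w : ℕ → ℕ} (hw : ∀ n, 2 ≤ w n) :
    ∀ n, ∀ x ∈ Set.Icc (0:ℝ) 1, prefixMap15 w n x ∈ Set.Icc (0:ℝ) 1 := by
  intro n
  induction n with
  | zero => intro x hx; simpa [prefixMap15] using hx
  | succ n ih =>
    intro x hx
    exact ih _ (Icc15_subset_unit (hw n) (S15_mem_Icc hx))

lemma prefixMap15_mem_Icc {w : ℕ → ℕ} (hw : ∀ n, 2 ≤ w n) :
    ∀ n, ∀ x ∈ Set.Icc (0:ℝ) 1,
      prefixMap15 w (n+1) x ∈ Set.Icc ((w 0:ℝ)⁻¹) ((w 0:ℝ)⁻¹ + ((2:ℝ)^(w 0))⁻¹) := by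
  intro n
  induction n with
  | zero => intro x hx; simpa [prefixMap15] using S15_mem_Icc hx
  | succ n ih =>
    intro x hx
    exact ih _ (Icc15_subset_unit (hw (n+1)) (S15_mem_Icc hx))

lemma F15_word_mem_Icc {x : ℝ} {w : ℕ → ℕ} (hw : ∀ n, 2 ≤ w n)
    (hx : Filter.Tendsto (fun n => prefixMap15 w n 0) Filter.atTop (nhds x)) :
    x ∈ Set.Icc ((w 0:ℝ)⁻¹) ((w 0:ℝ)⁻¹ + ((2:ℝ)^(w 0))⁻¹) := by
  refine isClosed_Icc.mem_of_tendsto hx ?_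
  filter_upwards [Filter.eventually_ge_atTop 1] with n hn
  obtain ⟨m, rfl⟩ := Nat.exists_eq_add_of_le hn
  rw [Nat.add_comm 1 m]
  exact prefixMap15_mem_Icc hw m 0 (by norm_num)

lemma r15_lt_one {i : ℕ} (hi : 2 ≤ i) : ((2:ℝ)^i)⁻¹ < 1 := by
  rw [inv_lt_one₀ (by positivity)]
  exact one_lt_pow₀ (by norm_num) (by omega)

lemma prefixMap15_const {i : ℕ} (hi : 2 ≤ i) (n : ℕ) (x : ℝ) :
    prefixMap15 (fun _ => i) n x =
      ((2:ℝ)^i)⁻¹^n * x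
        + (i:ℝ)⁻¹/(1 - ((2:ℝ)^i)⁻¹) * (1 - ((2:ℝ)^i)⁻¹^n) := by
  have hr : (1:ℝ) - ((2:ℝ)^i)⁻¹ ≠ 0 := by
    have := r15_lt_one hi; linarith
  induction n generalizing x with
  | zero => simp [prefixMap15]
  | succ n ih =>
    show prefixMap15 (fun _ => i) n (S15 i x) = _
    rw [ih]
    simp only [S15]
    have hkey : (i:ℝ)⁻¹/(1 - ((2:ℝ)^i)⁻¹) * (1 - ((2:ℝ)^i)⁻¹) = (i:ℝ)⁻¹ :=
      div_mul_cancel₀ _ hr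
    linear_combination (-(((2:ℝ)^i)⁻¹^n)) * hkey
  
lemma fixedPoint15_mem {i : ℕ} (hi : 2 ≤ i) :
    (i:ℝ)⁻¹/(1 - ((2:ℝ)^i)⁻¹) ∈ F15 := by
  set r : ℝ := ((2:ℝ)^i)⁻¹ with hrdef
  set c : ℝ := (i:ℝ)⁻¹/(1 - r) with hcdef
  refine ⟨fun _ => i, fun _ => hi, ?_⟩
  have h0 : Filter.Tendsto (fun n : ℕ => r^n) Filter.atTop (nhds 0) :=
    tendsto_pow_atTop_nhds_zero_of_lt_one (by positivity) (r15_lt_one hi)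
  have h1 : Filter.Tendsto (fun n : ℕ => r^n * 0 + c * (1 - r^n))
      Filter.atTop (nhds (0 * 0 + c * (1 - 0))) := by
    exact ((h0.mul tendsto_const_nhds).add
      (tendsto_const_nhds.mul (tendsto_const_nhds.sub h0)))
  simp only [zero_mul, sub_zero, mul_one, zero_add] at h1
  refine h1.congr fun n => ?_
  rw [prefixMap15_const hi n 0]

set_option maxHeartbeats 1000000 in
theorem stmt15 :
    ∀ θ ∈ Set.Ioo (0 : ℝ) 1, ∃ i₀ : ℕ, ∀ i : ℕ, i₀ ≤ i →
      covNum15 ((2 : ℝ) ^ (-(i : ℝ)))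
        (F15 ∩ Set.Ioo ((i : ℝ)⁻¹ - (2 : ℝ) ^ (-(i : ℝ) * θ) / 2)
          ((i : ℝ)⁻¹ + (2 : ℝ) ^ (-(i : ℝ) * θ) / 2)) = 1 := by
  rintro θ ⟨hθ0, hθ1⟩
  set b : ℝ := (2:ℝ)^(θ:ℝ) with hbdef
  have hb1 : 1 < b := (Real.one_lt_rpow_iff_of_pos (by norm_num)).2 (Or.inl ⟨by norm_num, hθ0⟩)
  have hev1 : ∀ᶠ i : ℕ in Filter.atTop, 2*(i:ℝ)^2 < b^i := by
    filter_upwards [(tendsto_pow_const_div_const_pow_of_one_lt 2 hb1).eventually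
      (gt_mem_nhds (by norm_num : (0:ℝ) < 1/2))] with n hn
    have hbn : (0:ℝ) < b^n := by positivity
    rw [div_lt_iff₀ hbn] at hn
    linarith
  have hev2 : ∀ᶠ i : ℕ in Filter.atTop, 1 < (i:ℝ)*(1-θ) :=
    (tendsto_natCast_atTop_atTop.atTop_mul_const (by linarith : (0:ℝ) < 1-θ)).eventually_gt_atTop 1
  have hev3 : ∀ᶠ i : ℕ in Filter.atTop, 3 ≤ i := Filter.eventually_ge_atTop 3
  obtain ⟨i₀, hi₀⟩ := Filter.eventually_atTop.1 ((hev1.and hev2).and hev3)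
  refine ⟨i₀, fun i hi => ?_⟩
  obtain ⟨⟨H1, H2⟩, H3⟩ := hi₀ i hi
  -- basic numeric setup
  have hi2 : 2 ≤ i := by omega
  have hi3 : (3:ℝ) ≤ (i:ℝ) := by exact_mod_cast H3
  have hi0 : (0:ℝ) < i := by linarith
  set r : ℝ := ((2:ℝ)^i)⁻¹ with hrdef
  have hr0 : (0:ℝ) < r := by positivity
  have hReq : (2:ℝ)^(-(i:ℝ)) = r := by
    rw [Real.rpow_neg (by norm_num), Real.rpow_natCast]
  have hδeq : (2:ℝ)^(-(i:ℝ)*θ) = (b^i)⁻¹ := by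
    rw [show -(i:ℝ)*θ = -(θ*(i:ℝ)) by ring, Real.rpow_neg (by norm_num),
      Real.rpow_mul (by norm_num), Real.rpow_natCast]
  set D : ℝ := (2:ℝ)^(-(i:ℝ)*θ)/2 with hDdef
  have hbipos : (0:ℝ) < b^i := by positivity
  have hD0 : 0 < D := by rw [hDdef, hδeq]; positivity
  have hii : (0:ℝ) < (i:ℝ)^2 := by positivity
  -- D < (i²)⁻¹/4
  have hDlt : D < ((i:ℝ)^2)⁻¹/4 := by
    rw [hDdef, hδeq]
    have : (b^i)⁻¹ < (2*(i:ℝ)^2)⁻¹ := by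
      apply inv_strictAnti₀ (by positivity) H1
    have h2 : (2*(i:ℝ)^2)⁻¹ = ((i:ℝ)^2)⁻¹/2 := by
      field_simp
    linarith
  -- r < (i²)⁻¹/2
  have hble : b^i ≤ (2:ℝ)^i := by
    apply pow_le_pow_left₀ (le_of_lt (by positivity))
    calc b = (2:ℝ)^(θ:ℝ) := hbdef
    _ ≤ (2:ℝ)^(1:ℝ) := Real.rpow_le_rpow_of_exponent_le (by norm_num) (le_of_lt hθ1)
    _ = 2 := Real.rpow_one 2
  have hrlt : r < ((i:ℝ)^2)⁻¹/2 := by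
    have h1 : 2*(i:ℝ)^2 < (2:ℝ)^i := lt_of_lt_of_le H1 hble
    have : r < (2*(i:ℝ)^2)⁻¹ := inv_strictAnti₀ (by positivity) h1
    have h2 : (2*(i:ℝ)^2)⁻¹ = ((i:ℝ)^2)⁻¹/2 := by field_simp
    linarith
  have hrD : r < D := by
    -- 2 * b^i < 2^i  since 1 + θ i < i
    have hlt : (1:ℝ) + θ*(i:ℝ) < (i:ℝ) := by nlinarith
    have : (2:ℝ)^((1:ℝ) + θ*(i:ℝ)) < (2:ℝ)^((i:ℝ)) :=
      Real.rpow_lt_rpow_of_exponent_lt (by norm_num) hlt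
    rw [Real.rpow_add (by norm_num), Real.rpow_one, Real.rpow_natCast] at this
    have hb' : (2:ℝ)^(θ*(i:ℝ)) = b^i := by
      rw [Real.rpow_mul (by norm_num), Real.rpow_natCast]
    rw [hb'] at this
    -- this : 2 * b^i < 2^i
    have h2i : (0:ℝ) < (2:ℝ)^i := by positivity
    rw [hDdef, hδeq, hrdef, lt_div_iff₀ (by norm_num : (0:ℝ)<2), inv_mul_eq_div,
      div_lt_iff₀ h2i, inv_mul_eq_div, lt_div_iff₀ hbipos]
    linarith
  -- the fixed point lies in the window
  set c : ℝ := (i:ℝ)⁻¹/(1 - r) with hcdef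
  have hrsmall : r ≤ 1/8 := by
    rw [hrdef, inv_le_comm₀ (by positivity) (by norm_num)]
    calc ((1:ℝ)/8)⁻¹ = 2^3 := by norm_num
    _ ≤ 2^i := pow_le_pow_right₀ (by norm_num) H3
  have hPpos : 0 < (i:ℝ)⁻¹ := inv_pos.2 hi0
  have hP : (i:ℝ)⁻¹ ≤ 1/3 := by
    rw [inv_le_comm₀ hi0 (by norm_num)]; norm_num; exact_mod_cast H3
  have hcF : c ∈ F15 := fixedPoint15_mem hi2
  have hcgt : (i:ℝ)⁻¹ < c := by
    rw [hcdef, lt_div_iff₀ (by linarith : (0:ℝ) < 1 - r)]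
    nlinarith
  have hcle : c ≤ (i:ℝ)⁻¹ + r := by
    rw [hcdef, div_le_iff₀ (by linarith : (0:ℝ) < 1 - r)]
    nlinarith
  have hcW : c ∈ Set.Ioo ((i:ℝ)⁻¹ - D) ((i:ℝ)⁻¹ + D) := ⟨by linarith, by linarith⟩
  -- every point of the intersection lies in Icc P (P+r)
  have hcover : ∀ x ∈ F15 ∩ Set.Ioo ((i:ℝ)⁻¹ - D) ((i:ℝ)⁻¹ + D),
      x ∈ Set.Icc ((i:ℝ)⁻¹) ((i:ℝ)⁻¹ + r) := by
    rintro x ⟨⟨w, hw, hwx⟩, hxI⟩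
    have hIcc := F15_word_mem_Icc hw hwx
    set j := w 0 with hj
    have hj2 : 2 ≤ j := hw 0
    have hjieq : j = i := by
      by_contra hne
      rcases lt_or_gt_of_ne hne with hlt | hgt
      · have hjle : (j:ℝ) + 1 ≤ i := by exact_mod_cast hlt
        have hjpos : (0:ℝ) < j := by
          have : (0:ℕ) < j := by omega
          exact_mod_cast this
        have hkey : (i:ℝ)⁻¹ + ((i:ℝ)^2)⁻¹ ≤ (j:ℝ)⁻¹ := by
          rw [inv_eq_one_div, inv_eq_one_div, inv_eq_one_div,
            div_add_div _ _ (ne_of_gt hi0) (ne_of_gt hii),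
            div_le_div_iff₀ (by positivity) hjpos]
          nlinarith
        have hx1 := hIcc.1
        have hx2 := hxI.2
        have hx3 : ((i:ℝ)^2)⁻¹/4 < ((i:ℝ)^2)⁻¹ := by
          have : 0 < ((i:ℝ)^2)⁻¹ := by positivity
          linarith
        linarith
      · have hjge : (i:ℝ) + 1 ≤ j := by exact_mod_cast hgt
        have hjpos : (0:ℝ) < j := by linarith
        have h1 : (j:ℝ)⁻¹ ≤ ((i:ℝ)+1)⁻¹ := inv_anti₀ (by linarith) hjge
        have h2 : ((2:ℝ)^j)⁻¹ ≤ r/2 := by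
          have hpow : (2:ℝ)^(i+1) ≤ (2:ℝ)^j := pow_le_pow_right₀ (by norm_num) (by omega)
          have h3 : ((2:ℝ)^j)⁻¹ ≤ ((2:ℝ)^(i+1))⁻¹ := inv_anti₀ (by positivity) hpow
          have h4 : ((2:ℝ)^(i+1))⁻¹ = r/2 := by
            rw [hrdef, pow_succ, mul_inv, div_eq_mul_inv]
          linarith
        have hkey : ((i:ℝ)+1)⁻¹ + ((i:ℝ)^2)⁻¹/2 ≤ (i:ℝ)⁻¹ := by
          rw [inv_eq_one_div, inv_eq_one_div, inv_eq_one_div, div_div,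
            div_add_div _ _ (by positivity : ((i:ℝ)+1) ≠ 0) (by positivity : ((i:ℝ)^2*2) ≠ 0),
            div_le_div_iff₀ (by positivity) hi0]
          nlinarith
        have hx1 := hIcc.2
        have hx2 := hxI.1
        linarith
    rw [hjieq] at hIcc
    exact ⟨hIcc.1, by rw [hrdef]; exact hIcc.2⟩
  -- conclude about the covering number
  rw [hReq]
  have hmemE : c ∈ F15 ∩ Set.Ioo ((i:ℝ)⁻¹ - D) ((i:ℝ)⁻¹ + D) := ⟨hcF, hcW⟩
  simp only [covNum15]
  have h1A : 1 ∈ {m : ℕ | ∃ cc : Fin m → ℝ,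
      F15 ∩ Set.Ioo ((i:ℝ)⁻¹ - D) ((i:ℝ)⁻¹ + D) ⊆ ⋃ j, Metric.ball (cc j) r} := by
    refine ⟨fun _ => (i:ℝ)⁻¹ + r/2, fun x hx => ?_⟩
    have hxI := hcover x hx
    refine Set.mem_iUnion.2 ⟨0, ?_⟩
    rw [Metric.mem_ball, Real.dist_eq, abs_lt]
    constructor <;> linarith [hxI.1, hxI.2]
  refine le_antisymm (Nat.sInf_le h1A) ?_
  rw [Nat.one_le_iff_ne_zero]
  intro h0
  rcases Nat.sInf_eq_zero.1 h0 with h | h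
  · obtain ⟨cc, hcc⟩ := h
    simpa using hcc hmemE
  · rw [h] at h1A
    exact h1A
end
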